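/- Let O be a discrete valuation ring with uniformizer π, valuation v and fraction field E, let σ be a ring involution of E with σ(O) = O, and let (V, h) be an n-dimensional hermitian space over (E, σ). Let U ⊆ J be two O-lattices in V such that π·U* = U (where U* is the dual lattice of U) and h(J, J) ⊆ O. Then for every orthogonal O-basis c₁, …, c_n of J (i.e. a basis with h(c_i, c_j) = 0 for i ≠ j), one has v(h(c_i, c_i)) ∈ {0, 1} for every i. -/

import Mathlib

open scoped Pointwise

/-- Let `O` be a DVR with uniformizer `π` and fraction field `E`, `σ` an
involution of `E` with `σ(O) = O`, and `(V, h)` an `n`-dimensional hermitian space over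
`(E, σ)`. Let `U ⊆ J` be `O`-lattices with `π·U* = U` and `h(J, J) ⊆ O`. Then for every
orthogonal `O`-basis `c₁, …, c_n` of `J`, each `h(c_i, c_i)` has valuation `0` or `1`,
i.e. is a unit of `O` or `π` times a unit of `O`. -/
theorem stmt13 {E : Type*} [Field E] (σ : E →+* E) (hσ : ∀ x, σ (σ x) = x)
    {V : Type*} [AddCommGroup V] [Module E V] [FiniteDimensional E V]
    (h : V →ₗ[E] V →ₛₗ[σ] E)
    (h_herm : ∀ x y : V, h y x = σ (h x y))
    (h_nondeg : ∀ x : V, (∀ y : V, h x y = 0) → x = 0)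
    (O : Subring E) [IsDomain ↥O] [IsDiscreteValuationRing ↥O]
    (hfrac : ∀ x : E, ∃ a b : ↥O, b ≠ 0 ∧ x = (a : E) / (b : E))
    (hO : ∀ a ∈ O, σ a ∈ O)
    (π : ↥O) (hπ : Irreducible π)
    (n : ℕ) (hn : Module.finrank E V = n)
    (U J : Submodule O V)
    (hUlat : ∃ b : Module.Basis (Fin n) E V, U = Submodule.span O (Set.range ⇑b))
    (hJlat : ∃ b : Module.Basis (Fin n) E V, J = Submodule.span O (Set.range ⇑b))
    (hUJ : U ≤ J)
    (hUdual : ((π : E) • {x : V | ∀ l ∈ U, h x l ∈ O}) = (U : Set V))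
    (hJJ : ∀ x ∈ J, ∀ y ∈ J, h x y ∈ O)
    (c : Fin n → V) (hcind : LinearIndependent E c)
    (hcspan : Submodule.span O (Set.range c) = J)
    (horth : ∀ i j : Fin n, i ≠ j → h (c i) (c j) = 0) :
    ∀ i : Fin n, ∃ u : ↥O, IsUnit u ∧
      (h (c i) (c i) = (u : E) ∨ h (c i) (c i) = (π : E) * (u : E)) := by
  intro i
  have hπE : (π : E) ≠ 0 := by
    intro hp
    exact hπ.ne_zero (Subtype.ext hp)
  have hciJ : c i ∈ J := by
    rw [← hcspan]
    exact Submodule.subset_span ⟨i, rfl⟩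
  have hdO : h (c i) (c i) ∈ O := hJJ _ hciJ _ hciJ
  -- c spans V over E
  have hspanE : Submodule.span E (Set.range c) = ⊤ :=
    hcind.span_eq_top_of_card_eq_finrank' (by simp [hn])
  -- d ≠ 0
  have hdne : h (c i) (c i) ≠ 0 := by
    intro hd0
    have hzero : ∀ y : V, h (c i) y = 0 := by
      intro y
      have hy : y ∈ Submodule.span E (Set.range c) := by rw [hspanE]; trivial
      obtain ⟨e, rfl⟩ := (Submodule.mem_span_range_iff_exists_fun E).1 hy
      rw [map_sum]
      refine Finset.sum_eq_zero fun j _ => ?_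
      rw [map_smulₛₗ]
      rcases eq_or_ne i j with rfl | hij
      · rw [hd0, smul_zero]
      · rw [horth i j hij, smul_zero]
    exact hcind.ne_zero i (h_nondeg _ hzero)
  set d : ↥O := ⟨h (c i) (c i), hdO⟩ with hddef
  have hdne' : d ≠ 0 := fun hd => hdne (by simpa [hddef] using congrArg (Subtype.val) hd)
  obtain ⟨k, u, hku⟩ := IsDiscreteValuationRing.eq_unit_mul_pow_irreducible hdne' hπ
  have hdE : h (c i) (c i) = ((u : ↥O) : E) * (π : E) ^ k := by
    have := congrArg (Subtype.val) hku
    simpa [hddef] using this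
  -- rule out k ≥ 2
  by_cases hk2 : 2 ≤ k
  · exfalso
    -- x = π⁻² • c i is in the dual set of U
    set x : V := ((π : E) ^ 2)⁻¹ • c i with hxdef
    have hxdual : x ∈ {x : V | ∀ l ∈ U, h x l ∈ O} := by
      intro l hl
      have hlJ : l ∈ Submodule.span O (Set.range c) := by rw [hcspan]; exact hUJ hl
      obtain ⟨a, rfl⟩ := (Submodule.mem_span_range_iff_exists_fun (↥O)).1 hlJ
      rw [map_sum]
      have hterm : ∀ j ∈ Finset.univ, j ≠ i →
          h x ((a j) • c j) = 0 := by
        intro j _ hj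
        have : (a j) • c j = ((a j : E)) • c j := rfl
        rw [this, map_smulₛₗ, hxdef, LinearMap.map_smul, LinearMap.smul_apply,
          horth i j (fun hij => hj hij.symm), smul_zero, smul_zero]
      rw [Finset.sum_eq_single_of_mem i (Finset.mem_univ i) hterm]
      have : (a i) • c i = ((a i : E)) • c i := rfl
      rw [this, map_smulₛₗ, hxdef, LinearMap.map_smul, LinearMap.smul_apply]
      have hval : σ (a i : E) • ((π : E) ^ 2)⁻¹ • h (c i) (c i)
          = σ (a i : E) * (((u : ↥O) : E) * (π : E) ^ (k - 2)) := by
        rw [hdE]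
        have hksplit : (π : E) ^ k = (π : E) ^ 2 * (π : E) ^ (k - 2) := by
          rw [← pow_add]
          congr 1
          omega
        rw [hksplit]
        field_simp
        have h2 : (π : E) ^ 2 * ((π : E)⁻¹) ^ 2 = 1 := by rw [← mul_pow, mul_inv_cancel₀ hπE, one_pow]
        linear_combination ((π : E) ^ (k - 2) * ((u : ↥O) : E) * σ (a i : E)) * h2
      rw [hval]
      exact Subring.mul_mem O (hO _ (a i).2)
        (Subring.mul_mem O (u : ↥O).2 (Subring.pow_mem O π.2 _))
    -- hence π • x ∈ U ⊆ J
    have hmem : (π : E) • x ∈ (U : Set V) := by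
      rw [← hUdual]
      exact ⟨x, hxdual, rfl⟩
    have hpx : (π : E) • x = (π : E)⁻¹ • c i := by
      rw [hxdef, smul_smul]
      congr 1
      rw [sq]
      field_simp
    rw [hpx] at hmem
    have hmemJ : (π : E)⁻¹ • c i ∈ Submodule.span O (Set.range c) := by
      rw [hcspan]; exact hUJ hmem
    obtain ⟨b, hb⟩ := (Submodule.mem_span_range_iff_exists_fun (↥O)).1 hmemJ
    -- use linear independence to conclude π⁻¹ ∈ O
    have hg : ∀ j, ((b j : E) - if j = i then (π : E)⁻¹ else 0) = 0 := by
      have := (Fintype.linearIndependent_iff.1 hcind)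
        (fun j => (b j : E) - if j = i then (π : E)⁻¹ else 0)
      apply this
      have : (∑ j, ((b j : E) - if j = i then (π : E)⁻¹ else 0) • c j)
          = (∑ j, (b j : E) • c j) - (π : E)⁻¹ • c i := by
        rw [show (π : E)⁻¹ • c i = ∑ j, (if j = i then (π : E)⁻¹ else 0) • c j by
          rw [Finset.sum_eq_single_of_mem i (Finset.mem_univ i)
            (by intro j _ hj; simp [hj]), if_pos rfl]]
        rw [← Finset.sum_sub_distrib]
        exact Finset.sum_congr rfl fun j _ => by rw [sub_smul]
      rw [this]
      have hb' : (∑ j, (b j : E) • c j) = (π : E)⁻¹ • c i := hb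
      rw [hb', sub_self]
    have hbi := hg i
    rw [if_pos rfl, sub_eq_zero] at hbi
    have : (π : E) * (b i : E) = 1 := by
      rw [hbi]
      field_simp
    have hunit : IsUnit π := IsUnit.of_mul_eq_one (b i) (Subtype.ext (by simpa using this))
    exact hπ.not_isUnit hunit
  · -- k = 0 or k = 1
    refine ⟨u, u.isUnit, ?_⟩
    interval_cases k
    · left; simpa using hdE
    · right; rw [hdE, pow_one, mul_comm]
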